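/- Let X_1, X_2, ... be i.i.d. complex random variables with distribution μ, and let z ∈ ℂ satisfy ∫_ℂ log_-|y - z| dμ(y) < ∞. Define L_n(z) = Σ_{k=1}^n 1/(z - X_k). Then almost surely limsup_{n→∞} (1/n) log|L_n(z)| ≤ 0. -/

import Mathlib

open MeasureTheory Filter

/-- `log_- t`: equals `|log t|` for `0 < t ≤ 1`, `0` for `t ≥ 1`, and `+∞` at `t = 0`. -/
noncomputable def logMinus (t : ℝ) : ENNReal :=
  if t = 0 then ⊤ else ENNReal.ofReal (max (-Real.log t) 0)

lemma measurable_logMinus : Measurable logMinus := by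
  unfold logMinus
  exact Measurable.ite (measurableSet_eq) measurable_const
    (ENNReal.measurable_ofReal.comp ((Real.measurable_log.neg).max measurable_const))

lemma log_le_of_le_exp {x y : ℝ} (hx : 0 ≤ x) (hy : 0 ≤ y) (h : x ≤ Real.exp y) :
    Real.log x ≤ y := by
  rcases eq_or_lt_of_le hx with h0 | h0
  · simp [← h0, hy]
  · rw [Real.log_le_iff_le_exp h0]; exact h

lemma limsup_nonpos_of_forall_eps {f : ℕ → ℝ}
    (h : ∀ ε : ℝ, 0 < ε → ∀ᶠ n in atTop, f n ≤ ε) : limsup f atTop ≤ 0 := by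
  rw [limsup_eq]
  by_cases hb : BddBelow {a | ∀ᶠ n in atTop, f n ≤ a}
  · have key : ∀ ε : ℝ, 0 < ε → sInf {a | ∀ᶠ n in atTop, f n ≤ a} ≤ ε :=
      fun ε hε => csInf_le hb (h ε hε)
    by_contra hlt
    push_neg at hlt
    linarith [key (sInf {a | ∀ᶠ n in atTop, f n ≤ a} / 2) (by linarith)]
  · rw [csInf_of_not_bddBelow hb, Real.sInf_empty]

/-- If `X_1, X_2, …` are i.i.d. with law `μ` and `∫ log_-|y - z| dμ(y) < ∞`, then almost surely
`limsup (1/n) log |L_n(z)| ≤ 0`, where `L_n(z) = Σ_{k=1}^n 1/(z - X_k)`. -/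
theorem limsup_log_Ln_le_zero {Ω : Type*} [MeasurableSpace Ω] (P : Measure Ω)
    [IsProbabilityMeasure P] (μ : Measure ℂ) [IsProbabilityMeasure μ] (X : ℕ → Ω → ℂ)
    (hmeas : ∀ n, Measurable (X n))
    (hind : ProbabilityTheory.iIndepFun X P)
    (hdist : ∀ n, Measure.map (X n) P = μ)
    (z : ℂ) (hz : ∫⁻ y, logMinus ‖y - z‖ ∂μ < ⊤) :
    ∀ᵐ ω ∂P, Filter.limsup
      (fun n : ℕ => (1 / n : ℝ) * Real.log ‖∑ k ∈ Finset.range n, (z - X k ω)⁻¹‖)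
      atTop ≤ 0 := by
  -- the function `g y = logMinus ‖y - z‖` and its real counterpart `Y`
  set g : ℂ → ENNReal := fun y => logMinus ‖y - z‖ with hgdef
  have hgmeas : Measurable g :=
    measurable_logMinus.comp ((measurable_id.sub measurable_const).norm)
  have hgfin : ∀ᵐ y ∂μ, g y < ⊤ := ae_lt_top hgmeas hz.ne
  set Y : ℂ → ℝ := fun y => max (-Real.log ‖y - z‖) 0 with hYdef
  have hYmeas : Measurable Y :=
    ((Real.measurable_log.comp ((measurable_id.sub measurable_const).norm)).neg).max
      measurable_const
  have hYnonneg : ∀ y, 0 ≤ Y y := fun y => le_max_right _ _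
  have hae0 : ∀ᵐ y ∂μ, ENNReal.ofReal (Y y) = g y := by
    filter_upwards [hgfin] with y hy
    by_cases h0 : ‖y - z‖ = 0
    · exfalso; rw [hgdef] at hy; simp only [logMinus, if_pos h0] at hy; exact (lt_irrefl _ hy)
    · simp only [hgdef, hYdef, logMinus, if_neg h0]
  have hYint : Integrable Y μ := by
    refine ⟨hYmeas.aestronglyMeasurable, ?_⟩
    rw [hasFiniteIntegral_iff_ofReal (Eventually.of_forall hYnonneg)]
    rwa [lintegral_congr_ae hae0]
  -- per-ε key claim
  have key : ∀ ε : ℝ, 0 < ε → ∀ᵐ ω ∂P, ∀ᶠ n : ℕ in atTop,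
      (1 / n : ℝ) * Real.log ‖∑ k ∈ Finset.range n, (z - X k ω)⁻¹‖ ≤ 3 * ε := by
    intro ε hε
    -- Borel–Cantelli: summability of tail probabilities
    have hint : Integrable (fun y => Y y / ε) μ := hYint.div_const ε
    have htsum : (∑' k : ℕ, μ {y | Y y / ε ∈ Set.Ioi (k : ℝ)}) < ⊤ := by
      letI : MeasureSpace ℂ := ⟨μ⟩
      haveI : IsProbabilityMeasure (volume : Measure ℂ) := by
        show IsProbabilityMeasure μ; infer_instance
      exact ProbabilityTheory.tsum_prob_mem_Ioi_lt_top hint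
        (fun y => div_nonneg (hYnonneg y) hε.le)
    have hsubset : ∀ k : ℕ, {y : ℂ | ENNReal.ofReal (ε * (k + 1)) ≤ g y} ≤ᵐ[μ]
        {y | Y y / ε ∈ Set.Ioi (k : ℝ)} := by
      intro k
      filter_upwards [hae0] with y hy h
      have h2 : ENNReal.ofReal (ε * (k + 1)) ≤ ENNReal.ofReal (Y y) := by
        rw [hy]; exact h
      have hYk : ε * (k + 1) ≤ Y y := (ENNReal.ofReal_le_ofReal_iff (hYnonneg y)).1 h2
      have : (k : ℝ) < Y y / ε := by
        rw [lt_div_iff₀ hε]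
        nlinarith
      exact this
    have hAk : ∀ k : ℕ, MeasurableSet {y : ℂ | ENNReal.ofReal (ε * (k + 1)) ≤ g y} :=
      fun k => hgmeas measurableSet_Ici
    have htsum2 : (∑' k : ℕ, μ {y : ℂ | ENNReal.ofReal (ε * (k + 1)) ≤ g y}) ≠ ⊤ := by
      refine ne_top_of_le_ne_top htsum.ne (ENNReal.tsum_le_tsum fun k => ?_)
      exact measure_mono_ae (hsubset k)
    -- transfer to Ω via the laws
    have hPs : ∀ k : ℕ, P {ω | ENNReal.ofReal (ε * (k + 1)) ≤ g (X k ω)}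
        = μ {y : ℂ | ENNReal.ofReal (ε * (k + 1)) ≤ g y} := by
      intro k
      rw [← hdist k, Measure.map_apply (hmeas k) (hAk k)]
      rfl
    have hBC : ∀ᵐ ω ∂P, ∀ᶠ k : ℕ in atTop,
        ω ∉ {ω | ENNReal.ofReal (ε * (k + 1)) ≤ g (X k ω)} := by
      apply ae_eventually_notMem
      rw [funext fun k => hPs k] at *
      simpa using htsum2
    filter_upwards [hBC] with ω hω
    obtain ⟨K, hK⟩ := eventually_atTop.1 hω
    -- terms are eventually bounded by exp(ε(k+1))
    have hterm : ∀ k : ℕ, K ≤ k → ‖(z - X k ω)⁻¹‖ ≤ Real.exp (ε * (k + 1)) := by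
      intro k hk
      have h1 := hK k hk
      simp only [Set.mem_setOf_eq, not_le] at h1
      have h0 : ‖X k ω - z‖ ≠ 0 := by
        intro h0
        rw [hgdef] at h1; simp only [logMinus, if_pos h0] at h1
        exact (not_top_lt h1)
      have h2 : max (-Real.log ‖X k ω - z‖) 0 < ε * (k + 1) := by
        rw [hgdef] at h1; simp only [logMinus, if_neg h0] at h1
        exact (ENNReal.ofReal_lt_ofReal_iff (by positivity)).1 h1
      have h3 : -Real.log ‖X k ω - z‖ < ε * (k + 1) := (max_lt_iff.1 h2).1
      have hpos : 0 < ‖X k ω - z‖ := lt_of_le_of_ne (norm_nonneg _) (Ne.symm h0)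
      have h4 : ‖(z - X k ω)⁻¹‖ = ‖X k ω - z‖⁻¹ := by
        rw [norm_inv, norm_sub_rev]
      rw [h4]
      have h5 : Real.log (‖X k ω - z‖⁻¹) < ε * (k + 1) := by
        rw [Real.log_inv]; exact h3
      exact le_of_lt ((Real.log_lt_iff_lt_exp (by positivity)).1 h5)
    set C : ℝ := ∑ k ∈ Finset.range K, ‖(z - X k ω)⁻¹‖ with hCdef
    have hC0 : 0 ≤ C := Finset.sum_nonneg fun k _ => norm_nonneg _
    -- each term is bounded by C + exp(ε(k+1))
    have htb : ∀ k : ℕ, ‖(z - X k ω)⁻¹‖ ≤ C + Real.exp (ε * (k + 1)) := by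
      intro k
      rcases lt_or_ge k K with hk | hk
      · have : ‖(z - X k ω)⁻¹‖ ≤ C :=
          Finset.single_le_sum (f := fun k => ‖(z - X k ω)⁻¹‖)
            (fun i _ => norm_nonneg _) (Finset.mem_range.2 hk)
        linarith [Real.exp_pos (ε * (k + 1))]
      · linarith [hterm k hk]
    -- hence the norm of the partial sum is at most n * (C + exp(ε n))
    have hsum : ∀ n : ℕ, ‖∑ k ∈ Finset.range n, (z - X k ω)⁻¹‖
        ≤ n * (C + Real.exp (ε * n)) := by
      intro n
      calc ‖∑ k ∈ Finset.range n, (z - X k ω)⁻¹‖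
          ≤ ∑ k ∈ Finset.range n, ‖(z - X k ω)⁻¹‖ := norm_sum_le _ _
        _ ≤ ∑ _k ∈ Finset.range n, (C + Real.exp (ε * n)) := by
            refine Finset.sum_le_sum fun k hk => ?_
            refine (htb k).trans ?_
            have : ε * (k + 1) ≤ ε * n := by
              have : (k : ℝ) + 1 ≤ n := by
                exact_mod_cast Nat.succ_le_of_lt (Finset.mem_range.1 hk)
              nlinarith
            linarith [Real.exp_le_exp.2 this]
        _ = n * (C + Real.exp (ε * n)) := by
            rw [Finset.sum_const, Finset.card_range, nsmul_eq_mul]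
    -- eventual bounds: C ≤ exp(ε n), n ≤ exp(ε n), 1/n ≤ ε
    have htend : Tendsto (fun n : ℕ => Real.exp (ε * n)) atTop atTop :=
      Real.tendsto_exp_atTop.comp (Tendsto.const_mul_atTop hε tendsto_natCast_atTop_atTop)
    have hev1 : ∀ᶠ n : ℕ in atTop, C ≤ Real.exp (ε * n) := htend.eventually_ge_atTop C
    have hev2 : ∀ᶠ n : ℕ in atTop, (n : ℝ) ≤ Real.exp (ε * n) := by
      have hdiv : Tendsto (fun n : ℕ => Real.exp (ε * n) / (ε * n)) atTop atTop :=
        (Real.tendsto_exp_div_pow_atTop 1).comp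
          (Tendsto.const_mul_atTop hε tendsto_natCast_atTop_atTop) |>.congr
          (fun n => by simp [pow_one])
      filter_upwards [hdiv.eventually_ge_atTop (1 / ε), eventually_ge_atTop 1] with n h1 hn1
      have hn0 : (0 : ℝ) < n := by exact_mod_cast hn1
      have hεn : 0 < ε * n := by positivity
      rw [le_div_iff₀ hεn] at h1
      have e : 1 / ε * (ε * (n : ℝ)) = (n : ℝ) := by field_simp
      linarith
    have hev3 : ∀ᶠ n : ℕ in atTop, (1 : ℝ) / n ≤ ε := by
      filter_upwards [(tendsto_natCast_atTop_atTop (R := ℝ)).eventually_ge_atTop (1 / ε),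
        eventually_ge_atTop 1] with n h1 hn1
      have hn0 : (0 : ℝ) < n := by exact_mod_cast hn1
      rw [div_le_iff₀ hε] at h1
      rw [div_le_iff₀ hn0]
      nlinarith
    filter_upwards [hev1, hev2, hev3, eventually_ge_atTop 1] with n h1 h2 h3 hn1
    have hn0 : (0 : ℝ) < n := by exact_mod_cast hn1
    -- ‖sum‖ ≤ exp(2εn + 1)
    have hb : ‖∑ k ∈ Finset.range n, (z - X k ω)⁻¹‖ ≤ Real.exp (2 * ε * n + 1) := by
      have h2e : (2 : ℝ) ≤ Real.exp 1 := by linarith [Real.add_one_le_exp (1 : ℝ)]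
      have e1 : Real.exp (ε * n) * Real.exp (ε * n) = Real.exp (2 * ε * n) := by
        rw [← Real.exp_add]; ring_nf
      have e2 : Real.exp (2 * ε * n) * Real.exp 1 = Real.exp (2 * ε * n + 1) := by
        rw [← Real.exp_add]
      calc ‖∑ k ∈ Finset.range n, (z - X k ω)⁻¹‖ ≤ n * (C + Real.exp (ε * n)) := hsum n
        _ ≤ Real.exp (ε * n) * (Real.exp (ε * n) + Real.exp (ε * n)) := by
            nlinarith [Real.exp_pos (ε * (n : ℝ))]
        _ = Real.exp (2 * ε * n) * 2 := by rw [← e1]; ring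
        _ ≤ Real.exp (2 * ε * n) * Real.exp 1 := by
            nlinarith [Real.exp_pos (2 * ε * (n : ℝ))]
        _ = Real.exp (2 * ε * n + 1) := e2
    have hlog : Real.log ‖∑ k ∈ Finset.range n, (z - X k ω)⁻¹‖ ≤ 2 * ε * n + 1 :=
      log_le_of_le_exp (norm_nonneg _) (by positivity) hb
    calc (1 / n : ℝ) * Real.log ‖∑ k ∈ Finset.range n, (z - X k ω)⁻¹‖
        ≤ (1 / n : ℝ) * (2 * ε * n + 1) := by
          exact mul_le_mul_of_nonneg_left hlog (by positivity)
      _ = 2 * ε + 1 / n := by field_simp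
      _ ≤ 3 * ε := by linarith
  -- combine over ε = 1/(m+1)
  have combo : ∀ᵐ ω ∂P, ∀ m : ℕ, ∀ᶠ n : ℕ in atTop,
      (1 / n : ℝ) * Real.log ‖∑ k ∈ Finset.range n, (z - X k ω)⁻¹‖ ≤ 3 * (1 / (m + 1)) :=
    (ae_all_iff).2 fun m => key (1 / (m + 1)) (by positivity)
  filter_upwards [combo] with ω hω
  apply limsup_nonpos_of_forall_eps
  intro ε hε
  obtain ⟨m, hm⟩ := exists_nat_gt (3 / ε)
  have hm' : 3 * (1 / ((m : ℝ) + 1)) ≤ ε := by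
    rw [div_lt_iff₀ hε] at hm
    rw [mul_one_div, div_le_iff₀ (by positivity : (0:ℝ) < (m:ℝ) + 1)]
    nlinarith
  exact (hω m).mono fun n hn => hn.trans hm'
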